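/- Let φ ∈ (0,1), θ ∈ (0,1), and λ > 0. Let W be Bernoulli with P(W = 1) = 1 − φ, let Y₁, Y₂ ~ Poisson((1 − θ)λ) and Z ~ Poisson(θλ), with W, Y₁, Y₂, Z mutually independent. Set X₁ = W(Y₁ + Z) and X₂ = W(Y₂ + Z). Then corr(X₁, X₂) = (θ + φλ)/(1 + φλ). -/

import Mathlib

open MeasureTheory ProbabilityTheory


lemma discrete_moment {Ω : Type*} [MeasurableSpace Ω] (μ : Measure Ω)
    (N : Ω → ℕ) (hNm : Measurable N) (g : ℕ → ℝ) (hg : ∀ k, 0 ≤ g k)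
    (p : ℕ → ℝ) (hp : ∀ k, 0 ≤ p k)
    (hN : ∀ k, μ {ω | N ω = k} = ENNReal.ofReal (p k))
    (hs : Summable (fun k => g k * p k)) :
    Integrable (fun ω => g (N ω)) μ ∧ ∫ ω, g (N ω) ∂μ = ∑' k, g k * p k := by
  have hgm : Measurable g := measurable_of_countable g
  have key : ∫⁻ ω, ENNReal.ofReal (g (N ω)) ∂μ = ENNReal.ofReal (∑' k, g k * p k) := by
    have h1 : ∫⁻ ω, ENNReal.ofReal (g (N ω)) ∂μ
        = ∫⁻ x, ENNReal.ofReal (g x) ∂(Measure.map N μ) :=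
      (lintegral_map (ENNReal.measurable_ofReal.comp hgm) hNm).symm
    rw [h1, lintegral_countable']
    have h2 : ∀ k : ℕ, (Measure.map N μ) {k} = ENNReal.ofReal (p k) := by
      intro k
      rw [Measure.map_apply hNm (measurableSet_singleton k)]
      exact hN k
    simp_rw [h2, ← ENNReal.ofReal_mul (hg _)]
    exact (ENNReal.ofReal_tsum_of_nonneg (fun k => mul_nonneg (hg k) (hp k)) hs).symm
  have hint : Integrable (fun ω => g (N ω)) μ := by
    refine ⟨(hgm.comp hNm).aestronglyMeasurable, ?_⟩
    rw [hasFiniteIntegral_iff_ofReal (Filter.Eventually.of_forall fun ω => hg _), key]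
    exact ENNReal.ofReal_lt_top
  refine ⟨hint, ?_⟩
  rw [integral_eq_lintegral_of_nonneg_ae (Filter.Eventually.of_forall fun ω => hg _)
    hint.1, key, ENNReal.toReal_ofReal (tsum_nonneg fun k => mul_nonneg (hg k) (hp k))]


lemma poisson_series (r : ℝ) (hr : 0 ≤ r) :
    (Summable (fun k : ℕ => (k : ℝ) * (Real.exp (-r) * r ^ k / k.factorial))
      ∧ ∑' k : ℕ, (k : ℝ) * (Real.exp (-r) * r ^ k / k.factorial) = r)
    ∧ Summable (fun k : ℕ => (k : ℝ)^2 * (Real.exp (-r) * r ^ k / k.factorial))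
      ∧ ∑' k : ℕ, (k : ℝ)^2 * (Real.exp (-r) * r ^ k / k.factorial) = r^2 + r := by
  have hE : (∑' k : ℕ, r ^ k / (k.factorial : ℝ)) = Real.exp r := by
    rw [Real.exp_eq_exp_ℝ, NormedSpace.exp_eq_tsum_div]
  have s0 : Summable (fun k : ℕ => r ^ k / (k.factorial : ℝ)) :=
    Real.summable_pow_div_factorial r
  have fne : ∀ k : ℕ, (k.factorial : ℝ) ≠ 0 := fun k =>
    Nat.cast_ne_zero.mpr k.factorial_ne_zero
  have hshift1 : ∀ k : ℕ, (((k+1 : ℕ)) : ℝ) * r ^ (k+1) / ((k+1).factorial : ℝ)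
      = r * (r ^ k / (k.factorial : ℝ)) := by
    intro k
    rw [Nat.factorial_succ]
    push_cast
    field_simp
    ring
  have s1 : Summable (fun k : ℕ => (k : ℝ) * r ^ k / (k.factorial : ℝ)) := by
    rw [← summable_nat_add_iff 1]
    exact (s0.mul_left r).congr fun k => (hshift1 k).symm
  have t1 : ∑' k : ℕ, (k : ℝ) * r ^ k / (k.factorial : ℝ) = r * Real.exp r := by
    rw [Summable.tsum_eq_zero_add s1]
    simp only [Nat.cast_zero, zero_mul, zero_div, zero_add]
    rw [tsum_congr hshift1, tsum_mul_left, hE]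
  have hshift2 : ∀ k : ℕ, (((k+1 : ℕ)) : ℝ)^2 * r ^ (k+1) / ((k+1).factorial : ℝ)
      = r * ((k : ℝ) * r ^ k / (k.factorial : ℝ)) + r * (r ^ k / (k.factorial : ℝ)) := by
    intro k
    rw [Nat.factorial_succ]
    push_cast
    field_simp
    ring
  have s2 : Summable (fun k : ℕ => (k : ℝ)^2 * r ^ k / (k.factorial : ℝ)) := by
    rw [← summable_nat_add_iff 1]
    exact ((s1.mul_left r).add (s0.mul_left r)).congr fun k => (hshift2 k).symm
  have t2 : ∑' k : ℕ, (k : ℝ)^2 * r ^ k / (k.factorial : ℝ)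
      = r * (r * Real.exp r) + r * Real.exp r := by
    rw [Summable.tsum_eq_zero_add s2]
    simp only [Nat.cast_zero, zero_pow, zero_mul, zero_div, zero_add, ne_eq,
      OfNat.ofNat_ne_zero, not_false_eq_true]
    rw [tsum_congr hshift2, Summable.tsum_add (s1.mul_left r) (s0.mul_left r),
      tsum_mul_left, tsum_mul_left, t1, hE]
  have hexp : Real.exp (-r) * Real.exp r = 1 := by
    rw [← Real.exp_add]; simp
  constructor
  · constructor
    · refine (s1.mul_left (Real.exp (-r))).congr fun k => ?_
      ring
    · have : (fun k : ℕ => (k : ℝ) * (Real.exp (-r) * r ^ k / k.factorial))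
          = fun k : ℕ => Real.exp (-r) * ((k : ℝ) * r ^ k / (k.factorial : ℝ)) := by
        funext k; ring
      rw [this, tsum_mul_left, t1]
      calc Real.exp (-r) * (r * Real.exp r) = r * (Real.exp (-r) * Real.exp r) := by ring
        _ = r := by rw [hexp, mul_one]
  · constructor
    · refine (s2.mul_left (Real.exp (-r))).congr fun k => ?_
      ring
    · have : (fun k : ℕ => (k : ℝ)^2 * (Real.exp (-r) * r ^ k / k.factorial))
          = fun k : ℕ => Real.exp (-r) * ((k : ℝ)^2 * r ^ k / (k.factorial : ℝ)) := by
        funext k; ring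
      rw [this, tsum_mul_left, t2]
      calc Real.exp (-r) * (r * (r * Real.exp r) + r * Real.exp r)
          = (r^2 + r) * (Real.exp (-r) * Real.exp r) := by ring
        _ = r^2 + r := by rw [hexp, mul_one]

lemma poisson_moments {Ω : Type*} [MeasurableSpace Ω] (μ : Measure Ω)
    (N : Ω → ℕ) (hNm : Measurable N) (r : ℝ) (hr : 0 ≤ r)
    (hN : ∀ k, μ {ω | N ω = k} = ENNReal.ofReal (Real.exp (-r) * r ^ k / k.factorial)) :
    (Integrable (fun ω => (N ω : ℝ)) μ ∧ ∫ ω, (N ω : ℝ) ∂μ = r)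
    ∧ Integrable (fun ω => (N ω : ℝ)^2) μ ∧ ∫ ω, (N ω : ℝ)^2 ∂μ = r^2 + r := by
  have hp : ∀ k : ℕ, 0 ≤ Real.exp (-r) * r ^ k / k.factorial := fun k => by positivity
  obtain ⟨⟨s1, t1⟩, s2, t2⟩ := poisson_series r hr
  have h1 := discrete_moment μ N hNm (fun k => (k : ℝ)) (fun k => Nat.cast_nonneg k) _ hp hN s1
  have h2 := discrete_moment μ N hNm (fun k => (k : ℝ)^2)
    (fun k => by positivity) _ hp hN s2
  exact ⟨⟨h1.1, h1.2.trans t1⟩, h2.1, h2.2.trans t2⟩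

lemma bernoulli_moment {Ω : Type*} [MeasurableSpace Ω] (μ : Measure Ω) [IsProbabilityMeasure μ]
    (φ : ℝ) (hφ : φ ≤ 1) (W : Ω → ℕ) (hWm : Measurable W)
    (hW01 : ∀ ω, W ω = 0 ∨ W ω = 1)
    (hW1 : μ {ω | W ω = 1} = ENNReal.ofReal (1 - φ)) :
    Integrable (fun ω => (W ω : ℝ)) μ ∧ ∫ ω, (W ω : ℝ) ∂μ = 1 - φ := by
  have hs : MeasurableSet {ω | W ω = 1} := hWm (measurableSet_singleton 1)
  have heq : (fun ω => (W ω : ℝ)) = {ω | W ω = 1}.indicator 1 := by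
    funext ω
    rcases hW01 ω with h | h <;> simp [Set.indicator, h]
  constructor
  · rw [heq]; exact (integrable_const (1:ℝ)).indicator hs
  · rw [heq, integral_indicator_one hs, measureReal_def, hW1, ENNReal.toReal_ofReal (by linarith)]

set_option maxHeartbeats 1000000 in
/-- In the common zero-inflation bivariate Poisson model with equal rates and a common shock,
`X₁ = W (Y₁ + Z)`, `X₂ = W (Y₂ + Z)` with `W ~ Bernoulli(1-φ)`, `Y₁, Y₂ ~ Poisson((1-θ)λ)`,
`Z ~ Poisson(θλ)` all mutually independent, one has `corr(X₁,X₂) = (θ + φλ)/(1 + φλ)`, where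
`corr(U,V) = cov(U,V)/√(var(U) var(V))` and `cov(U,V) = E(UV) - E(U)E(V)`.
Mutual independence of `W, Y₁, Y₂, Z` is expressed by the equivalent sequential conditions
`W ⟂ (Y₁, Y₂, Z)`, `Y₁ ⟂ (Y₂, Z)` and `Y₂ ⟂ Z`. -/
theorem stmt_10 {Ω : Type*} [MeasurableSpace Ω] (μ : Measure Ω) [IsProbabilityMeasure μ]
    (φ θ lam : ℝ) (hφ : φ ∈ Set.Ioo (0 : ℝ) 1) (hθ : θ ∈ Set.Ioo (0 : ℝ) 1) (hlam : 0 < lam)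
    (W Y₁ Y₂ Z : Ω → ℕ)
    (hWm : Measurable W) (hY₁m : Measurable Y₁) (hY₂m : Measurable Y₂) (hZm : Measurable Z)
    (hW01 : ∀ ω, W ω = 0 ∨ W ω = 1)
    (hW1 : μ {ω | W ω = 1} = ENNReal.ofReal (1 - φ))
    (hY₁ : ∀ k : ℕ, μ {ω | Y₁ ω = k}
      = ENNReal.ofReal (Real.exp (-((1 - θ) * lam)) * ((1 - θ) * lam) ^ k / Nat.factorial k))
    (hY₂ : ∀ k : ℕ, μ {ω | Y₂ ω = k}
      = ENNReal.ofReal (Real.exp (-((1 - θ) * lam)) * ((1 - θ) * lam) ^ k / Nat.factorial k))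
    (hZ : ∀ k : ℕ, μ {ω | Z ω = k}
      = ENNReal.ofReal (Real.exp (-(θ * lam)) * (θ * lam) ^ k / Nat.factorial k))
    (hind₁ : IndepFun W (fun ω => (Y₁ ω, Y₂ ω, Z ω)) μ)
    (hind₂ : IndepFun Y₁ (fun ω => (Y₂ ω, Z ω)) μ)
    (hind₃ : IndepFun Y₂ Z μ) :
    ((∫ ω, ((W ω * (Y₁ ω + Z ω) : ℕ) : ℝ) * ((W ω * (Y₂ ω + Z ω) : ℕ) : ℝ) ∂μ)
        - (∫ ω, ((W ω * (Y₁ ω + Z ω) : ℕ) : ℝ) ∂μ)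
          * (∫ ω, ((W ω * (Y₂ ω + Z ω) : ℕ) : ℝ) ∂μ))
      / Real.sqrt (variance (fun ω => ((W ω * (Y₁ ω + Z ω) : ℕ) : ℝ)) μ
          * variance (fun ω => ((W ω * (Y₂ ω + Z ω) : ℕ) : ℝ)) μ)
    = (θ + φ * lam) / (1 + φ * lam) := by
  obtain ⟨hφ0, hφ1⟩ := hφ
  obtain ⟨hθ0, hθ1⟩ := hθ
  have hrY : (0:ℝ) ≤ (1 - θ) * lam := by nlinarith
  have hrZ : (0:ℝ) ≤ θ * lam := by nlinarith
  obtain ⟨⟨haI, haE⟩, haI2, haE2⟩ := poisson_moments μ Y₁ hY₁m _ hrY hY₁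
  obtain ⟨⟨hbI, hbE⟩, hbI2, hbE2⟩ := poisson_moments μ Y₂ hY₂m _ hrY hY₂
  obtain ⟨⟨hcI, hcE⟩, hcI2, hcE2⟩ := poisson_moments μ Z hZm _ hrZ hZ
  obtain ⟨hwI, hwE⟩ := bernoulli_moment μ φ (le_of_lt hφ1) W hWm hW01 hW1
  have mcast : Measurable (fun n : ℕ => (n : ℝ)) := measurable_of_countable _
  -- pairwise independence of the real-valued Poisson variables
  have hab : IndepFun (fun ω => (Y₁ ω : ℝ)) (fun ω => (Y₂ ω : ℝ)) μ :=
    (hind₂.comp measurable_id measurable_fst).comp mcast mcast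
  have hac : IndepFun (fun ω => (Y₁ ω : ℝ)) (fun ω => (Z ω : ℝ)) μ :=
    (hind₂.comp measurable_id measurable_snd).comp mcast mcast
  have hbc : IndepFun (fun ω => (Y₂ ω : ℝ)) (fun ω => (Z ω : ℝ)) μ :=
    hind₃.comp mcast mcast
  -- products of Poisson variables
  have habI : Integrable (fun ω => (Y₁ ω : ℝ) * (Y₂ ω : ℝ)) μ := hab.integrable_mul haI hbI
  have hacI : Integrable (fun ω => (Y₁ ω : ℝ) * (Z ω : ℝ)) μ := hac.integrable_mul haI hcI
  have hbcI : Integrable (fun ω => (Y₂ ω : ℝ) * (Z ω : ℝ)) μ := hbc.integrable_mul hbI hcI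
  have habE : ∫ ω, (Y₁ ω : ℝ) * (Y₂ ω : ℝ) ∂μ = ((1-θ)*lam) * ((1-θ)*lam) := by
    rw [hab.integral_fun_mul_eq_mul_integral haI.aestronglyMeasurable hbI.aestronglyMeasurable, haE, hbE]
  have hacE : ∫ ω, (Y₁ ω : ℝ) * (Z ω : ℝ) ∂μ = ((1-θ)*lam) * (θ*lam) := by
    rw [hac.integral_fun_mul_eq_mul_integral haI.aestronglyMeasurable hcI.aestronglyMeasurable, haE, hcE]
  have hbcE : ∫ ω, (Y₂ ω : ℝ) * (Z ω : ℝ) ∂μ = ((1-θ)*lam) * (θ*lam) := by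
    rw [hbc.integral_fun_mul_eq_mul_integral hbI.aestronglyMeasurable hcI.aestronglyMeasurable, hbE, hcE]
  -- W squared facts
  have hww : ∀ ω, (W ω : ℝ) * (W ω : ℝ) = (W ω : ℝ) := fun ω => by
    rcases hW01 ω with h | h <;> simp [h]
  have hkey12 : ∀ ω, ((W ω : ℝ) * ((Y₁ ω : ℝ) + (Z ω : ℝ)))
      * ((W ω : ℝ) * ((Y₂ ω : ℝ) + (Z ω : ℝ)))
      = (W ω : ℝ) * (((Y₁ ω : ℝ) + (Z ω : ℝ)) * ((Y₂ ω : ℝ) + (Z ω : ℝ))) := fun ω => by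
    linear_combination (((Y₁ ω : ℝ) + (Z ω : ℝ)) * ((Y₂ ω : ℝ) + (Z ω : ℝ))) * hww ω
  have hkey1 : ∀ ω, ((W ω : ℝ) * ((Y₁ ω : ℝ) + (Z ω : ℝ)))^2
      = (W ω : ℝ) * ((Y₁ ω : ℝ) + (Z ω : ℝ))^2 := fun ω => by
    linear_combination (((Y₁ ω : ℝ) + (Z ω : ℝ))^2) * hww ω
  have hkey2 : ∀ ω, ((W ω : ℝ) * ((Y₂ ω : ℝ) + (Z ω : ℝ)))^2
      = (W ω : ℝ) * ((Y₂ ω : ℝ) + (Z ω : ℝ))^2 := fun ω => by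
    linear_combination (((Y₂ ω : ℝ) + (Z ω : ℝ))^2) * hww ω
  -- independence of W from functions of the triple
  have hw1 : IndepFun (fun ω => (W ω : ℝ)) (fun ω => (Y₁ ω : ℝ) + (Z ω : ℝ)) μ :=
    hind₁.comp mcast
      (show Measurable (fun p : ℕ × ℕ × ℕ => (p.1 : ℝ) + (p.2.2 : ℝ)) from
        measurable_of_countable _)
  have hw2 : IndepFun (fun ω => (W ω : ℝ)) (fun ω => (Y₂ ω : ℝ) + (Z ω : ℝ)) μ :=
    hind₁.comp mcast
      (show Measurable (fun p : ℕ × ℕ × ℕ => (p.2.1 : ℝ) + (p.2.2 : ℝ)) from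
        measurable_of_countable _)
  have hw12 : IndepFun (fun ω => (W ω : ℝ))
      (fun ω => ((Y₁ ω : ℝ) + (Z ω : ℝ)) * ((Y₂ ω : ℝ) + (Z ω : ℝ))) μ :=
    hind₁.comp mcast
      (show Measurable (fun p : ℕ × ℕ × ℕ => ((p.1 : ℝ) + (p.2.2 : ℝ)) * ((p.2.1 : ℝ) + (p.2.2 : ℝ))) from
        measurable_of_countable _)
  have hw1sq : IndepFun (fun ω => (W ω : ℝ)) (fun ω => ((Y₁ ω : ℝ) + (Z ω : ℝ))^2) μ :=
    hind₁.comp mcast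
      (show Measurable (fun p : ℕ × ℕ × ℕ => ((p.1 : ℝ) + (p.2.2 : ℝ))^2) from
        measurable_of_countable _)
  have hw2sq : IndepFun (fun ω => (W ω : ℝ)) (fun ω => ((Y₂ ω : ℝ) + (Z ω : ℝ))^2) μ :=
    hind₁.comp mcast
      (show Measurable (fun p : ℕ × ℕ × ℕ => ((p.2.1 : ℝ) + (p.2.2 : ℝ))^2) from
        measurable_of_countable _)
  -- integrability and integrals of sums
  have hS1I : Integrable (fun ω => (Y₁ ω : ℝ) + (Z ω : ℝ)) μ := haI.add hcI
  have hS2I : Integrable (fun ω => (Y₂ ω : ℝ) + (Z ω : ℝ)) μ := hbI.add hcI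
  have hS1E : ∫ ω, ((Y₁ ω : ℝ) + (Z ω : ℝ)) ∂μ = lam := by
    rw [integral_add haI hcI, haE, hcE]; ring
  have hS2E : ∫ ω, ((Y₂ ω : ℝ) + (Z ω : ℝ)) ∂μ = lam := by
    rw [integral_add hbI hcI, hbE, hcE]; ring
  -- squares of sums
  have hS1sqI : Integrable (fun ω => ((Y₁ ω : ℝ) + (Z ω : ℝ))^2) μ := by
    have h0 : Integrable (fun ω => (Y₁ ω : ℝ)^2 + 2*((Y₁ ω : ℝ) * (Z ω : ℝ)) + (Z ω : ℝ)^2) μ :=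
      (haI2.add (hacI.const_mul 2)).add hcI2
    exact h0.congr (Filter.Eventually.of_forall fun ω => by ring)
  have hS2sqI : Integrable (fun ω => ((Y₂ ω : ℝ) + (Z ω : ℝ))^2) μ := by
    have h0 : Integrable (fun ω => (Y₂ ω : ℝ)^2 + 2*((Y₂ ω : ℝ) * (Z ω : ℝ)) + (Z ω : ℝ)^2) μ :=
      (hbI2.add (hbcI.const_mul 2)).add hcI2
    exact h0.congr (Filter.Eventually.of_forall fun ω => by ring)
  have hS1sqE : ∫ ω, ((Y₁ ω : ℝ) + (Z ω : ℝ))^2 ∂μ = lam^2 + lam := by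
    have h0 : ∫ ω, ((Y₁ ω : ℝ) + (Z ω : ℝ))^2 ∂μ
        = ∫ ω, ((Y₁ ω : ℝ)^2 + 2*((Y₁ ω : ℝ) * (Z ω : ℝ)) + (Z ω : ℝ)^2) ∂μ :=
      integral_congr_ae (Filter.Eventually.of_forall fun ω => by ring)
    have i1 : Integrable (fun ω => (Y₁ ω : ℝ)^2 + 2*((Y₁ ω : ℝ) * (Z ω : ℝ))) μ :=
      haI2.add (hacI.const_mul 2)
    have i2 : Integrable (fun ω => 2*((Y₁ ω : ℝ) * (Z ω : ℝ))) μ := hacI.const_mul 2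
    rw [h0, integral_add i1 hcI2, integral_add haI2 i2,
      integral_const_mul, haE2, hacE, hcE2]
    ring
  have hS2sqE : ∫ ω, ((Y₂ ω : ℝ) + (Z ω : ℝ))^2 ∂μ = lam^2 + lam := by
    have h0 : ∫ ω, ((Y₂ ω : ℝ) + (Z ω : ℝ))^2 ∂μ
        = ∫ ω, ((Y₂ ω : ℝ)^2 + 2*((Y₂ ω : ℝ) * (Z ω : ℝ)) + (Z ω : ℝ)^2) ∂μ :=
      integral_congr_ae (Filter.Eventually.of_forall fun ω => by ring)
    have i1 : Integrable (fun ω => (Y₂ ω : ℝ)^2 + 2*((Y₂ ω : ℝ) * (Z ω : ℝ))) μ :=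
      hbI2.add (hbcI.const_mul 2)
    have i2 : Integrable (fun ω => 2*((Y₂ ω : ℝ) * (Z ω : ℝ))) μ := hbcI.const_mul 2
    rw [h0, integral_add i1 hcI2, integral_add hbI2 i2,
      integral_const_mul, hbE2, hbcE, hcE2]
    ring
  -- product of the two sums
  have hqI : Integrable (fun ω => ((Y₁ ω : ℝ) + (Z ω : ℝ)) * ((Y₂ ω : ℝ) + (Z ω : ℝ))) μ := by
    have h0 : Integrable (fun ω => (Y₁ ω : ℝ)*(Y₂ ω : ℝ) + (Y₁ ω : ℝ)*(Z ω : ℝ)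
        + ((Y₂ ω : ℝ)*(Z ω : ℝ) + (Z ω : ℝ)^2)) μ :=
      (habI.add hacI).add (hbcI.add hcI2)
    exact h0.congr (Filter.Eventually.of_forall fun ω => by ring)
  have hqE : ∫ ω, ((Y₁ ω : ℝ) + (Z ω : ℝ)) * ((Y₂ ω : ℝ) + (Z ω : ℝ)) ∂μ = lam^2 + θ*lam := by
    have h0 : ∫ ω, ((Y₁ ω : ℝ) + (Z ω : ℝ)) * ((Y₂ ω : ℝ) + (Z ω : ℝ)) ∂μ
        = ∫ ω, ((Y₁ ω : ℝ)*(Y₂ ω : ℝ) + (Y₁ ω : ℝ)*(Z ω : ℝ)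
            + ((Y₂ ω : ℝ)*(Z ω : ℝ) + (Z ω : ℝ)^2)) ∂μ :=
      integral_congr_ae (Filter.Eventually.of_forall fun ω => by ring)
    have i1 : Integrable (fun ω => (Y₁ ω : ℝ)*(Y₂ ω : ℝ) + (Y₁ ω : ℝ)*(Z ω : ℝ)) μ :=
      habI.add hacI
    have i2 : Integrable (fun ω => (Y₂ ω : ℝ)*(Z ω : ℝ) + (Z ω : ℝ)^2) μ := hbcI.add hcI2
    rw [h0, integral_add i1 i2, integral_add habI hacI,
      integral_add hbcI hcI2, habE, hacE, hbcE, hcE2]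
    ring
  -- the three main integrals
  have hE1 : ∫ ω, (W ω : ℝ) * ((Y₁ ω : ℝ) + (Z ω : ℝ)) ∂μ = (1-φ) * lam := by
    rw [hw1.integral_fun_mul_eq_mul_integral hwI.aestronglyMeasurable hS1I.aestronglyMeasurable, hwE, hS1E]
  have hE2 : ∫ ω, (W ω : ℝ) * ((Y₂ ω : ℝ) + (Z ω : ℝ)) ∂μ = (1-φ) * lam := by
    rw [hw2.integral_fun_mul_eq_mul_integral hwI.aestronglyMeasurable hS2I.aestronglyMeasurable, hwE, hS2E]
  have hE12 : ∫ ω, ((W ω : ℝ) * ((Y₁ ω : ℝ) + (Z ω : ℝ)))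
      * ((W ω : ℝ) * ((Y₂ ω : ℝ) + (Z ω : ℝ))) ∂μ = (1-φ) * (lam^2 + θ*lam) := by
    have h0 : ∫ ω, ((W ω : ℝ) * ((Y₁ ω : ℝ) + (Z ω : ℝ)))
        * ((W ω : ℝ) * ((Y₂ ω : ℝ) + (Z ω : ℝ))) ∂μ
        = ∫ ω, (W ω : ℝ) * (((Y₁ ω : ℝ) + (Z ω : ℝ)) * ((Y₂ ω : ℝ) + (Z ω : ℝ))) ∂μ := by
      exact integral_congr_ae (Filter.Eventually.of_forall hkey12)
    rw [h0, hw12.integral_fun_mul_eq_mul_integral hwI.aestronglyMeasurable hqI.aestronglyMeasurable, hwE, hqE]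
  -- variances
  have hwacm : AEStronglyMeasurable (fun ω => (W ω : ℝ) * ((Y₁ ω : ℝ) + (Z ω : ℝ))) μ :=
    ((mcast.comp hWm).mul ((mcast.comp hY₁m).add (mcast.comp hZm))).aestronglyMeasurable
  have hwbcm : AEStronglyMeasurable (fun ω => (W ω : ℝ) * ((Y₂ ω : ℝ) + (Z ω : ℝ))) μ :=
    ((mcast.comp hWm).mul ((mcast.comp hY₂m).add (mcast.comp hZm))).aestronglyMeasurable
  have hsq1I : Integrable (fun ω => ((W ω : ℝ) * ((Y₁ ω : ℝ) + (Z ω : ℝ)))^2) μ := by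
    have h0 : Integrable (fun ω => (W ω : ℝ) * ((Y₁ ω : ℝ) + (Z ω : ℝ))^2) μ :=
      hw1sq.integrable_mul hwI hS1sqI
    exact h0.congr (Filter.Eventually.of_forall fun ω => (hkey1 ω).symm)
  have hsq2I : Integrable (fun ω => ((W ω : ℝ) * ((Y₂ ω : ℝ) + (Z ω : ℝ)))^2) μ := by
    have h0 : Integrable (fun ω => (W ω : ℝ) * ((Y₂ ω : ℝ) + (Z ω : ℝ))^2) μ :=
      hw2sq.integrable_mul hwI hS2sqI
    exact h0.congr (Filter.Eventually.of_forall fun ω => (hkey2 ω).symm)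
  have hsq1E : ∫ ω, ((W ω : ℝ) * ((Y₁ ω : ℝ) + (Z ω : ℝ)))^2 ∂μ = (1-φ) * (lam^2 + lam) := by
    have h0 : ∫ ω, ((W ω : ℝ) * ((Y₁ ω : ℝ) + (Z ω : ℝ)))^2 ∂μ
        = ∫ ω, (W ω : ℝ) * ((Y₁ ω : ℝ) + (Z ω : ℝ))^2 ∂μ :=
      integral_congr_ae (Filter.Eventually.of_forall hkey1)
    rw [h0, hw1sq.integral_fun_mul_eq_mul_integral hwI.aestronglyMeasurable hS1sqI.aestronglyMeasurable, hwE, hS1sqE]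
  have hsq2E : ∫ ω, ((W ω : ℝ) * ((Y₂ ω : ℝ) + (Z ω : ℝ)))^2 ∂μ = (1-φ) * (lam^2 + lam) := by
    have h0 : ∫ ω, ((W ω : ℝ) * ((Y₂ ω : ℝ) + (Z ω : ℝ)))^2 ∂μ
        = ∫ ω, (W ω : ℝ) * ((Y₂ ω : ℝ) + (Z ω : ℝ))^2 ∂μ :=
      integral_congr_ae (Filter.Eventually.of_forall hkey2)
    rw [h0, hw2sq.integral_fun_mul_eq_mul_integral hwI.aestronglyMeasurable hS2sqI.aestronglyMeasurable, hwE, hS2sqE]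
  have hmem1 : MemLp (fun ω => (W ω : ℝ) * ((Y₁ ω : ℝ) + (Z ω : ℝ))) 2 μ :=
    (memLp_two_iff_integrable_sq hwacm).mpr hsq1I
  have hmem2 : MemLp (fun ω => (W ω : ℝ) * ((Y₂ ω : ℝ) + (Z ω : ℝ))) 2 μ :=
    (memLp_two_iff_integrable_sq hwbcm).mpr hsq2I
  have hV1 : variance (fun ω => (W ω : ℝ) * ((Y₁ ω : ℝ) + (Z ω : ℝ))) μ
      = (1-φ)*lam*(1+φ*lam) := by
    have e1 : integral μ ((fun ω => (W ω : ℝ) * ((Y₁ ω : ℝ) + (Z ω : ℝ))) ^ 2)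
        = (1-φ) * (lam^2 + lam) := hsq1E
    rw [variance_eq_sub hmem1, e1, hE1]; ring
  have hV2 : variance (fun ω => (W ω : ℝ) * ((Y₂ ω : ℝ) + (Z ω : ℝ))) μ
      = (1-φ)*lam*(1+φ*lam) := by
    have e2 : integral μ ((fun ω => (W ω : ℝ) * ((Y₂ ω : ℝ) + (Z ω : ℝ))) ^ 2)
        = (1-φ) * (lam^2 + lam) := hsq2E
    rw [variance_eq_sub hmem2, e2, hE2]; ring
  -- assemble
  simp only [Nat.cast_mul, Nat.cast_add]
  rw [hE12, hE1, hE2, hV1, hV2]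
  have hpos : (0:ℝ) < (1-φ)*lam := mul_pos (by linarith) hlam
  have hpos2 : (0:ℝ) < 1+φ*lam := by nlinarith [mul_pos hφ0 hlam]
  have hv : (0:ℝ) ≤ (1-φ)*lam*(1+φ*lam) := le_of_lt (mul_pos hpos hpos2)
  rw [Real.sqrt_mul_self hv]
  have hnum : (1-φ) * (lam^2 + θ*lam) - (1-φ)*lam*((1-φ)*lam)
      = ((1-φ)*lam) * (θ + φ*lam) := by ring
  have hden : (1-φ)*lam*(1+φ*lam) = ((1-φ)*lam) * (1+φ*lam) := by ring
  rw [hnum, hden, mul_div_mul_left _ _ (ne_of_gt hpos)]
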